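/- arXiv:0708.2271 — 2 statements merged into one kernel-verified Lean document; each statement's English description precedes it below -/
import Mathlib

section
/- With the same hypotheses, and $X^{(n)}$ defined by $X^{(0)} \equiv 1$, $X^{(n)}(x) = n\int_0^x X^{(n-1)}(\xi) g_0^{-2}(\xi) d\xi$ for odd $n$ and $X^{(n)}(x) = n\int_0^x X^{(n-1)}(\xi) g_0^2(\xi) d\xi$ for even $n$, the function $u_2(x) = g_0(x) \sum_{\text{odd } n \geq 1} \frac{\omega^n}{n!} X^{(n)}(x)$ is a solution of $-u_2'' + q u_2 + \omega^2 u_2 = 0$ on $I$. -/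
open scoped Nat

/-- The SPPS recursive integrals: `spps wodd weven 0 ≡ 1` and
`spps wodd weven n x = n ∫₀ˣ spps wodd weven (n-1) · w`, where the weight `w`
is `wodd` when `n` is odd and `weven` when `n` is even. -/
noncomputable def spps (wodd weven : ℝ → ℂ) : ℕ → ℝ → ℂ
  | 0 => fun _ => 1
  | n + 1 => fun x => (n + 1 : ℂ) *
      ∫ t in (0:ℝ)..x,
        spps wodd weven n t * (if (n + 1) % 2 = 1 then wodd t else weven t)


lemma integral_abs_pow (n : ℕ) (x : ℝ) :
    |∫ t in (0:ℝ)..x, |t| ^ n| = |x| ^ (n + 1) / (n + 1) := by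
  rcases le_or_gt 0 x with hx | hx
  · have h1 : (∫ t in (0:ℝ)..x, |t| ^ n) = ∫ t in (0:ℝ)..x, t ^ n := by
      apply intervalIntegral.integral_congr
      intro t ht
      rw [Set.uIcc_of_le hx] at ht
      simp [abs_of_nonneg ht.1]
    rw [h1, integral_pow]
    rw [abs_of_nonneg hx, zero_pow (by omega : n + 1 ≠ 0)]
    rw [abs_of_nonneg (div_nonneg (by simpa using pow_nonneg hx (n+1)) (by positivity))]
    ring
  · have h1 : (∫ t in (0:ℝ)..x, |t| ^ n) = ∫ t in (0:ℝ)..x, (-t) ^ n := by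
      apply intervalIntegral.integral_congr
      intro t ht
      rw [Set.uIcc_of_ge hx.le] at ht
      simp [abs_of_nonpos ht.2]
    have h2 : (∫ t in (0:ℝ)..x, (-t) ^ n) = ∫ t in (-x)..(-(0:ℝ)), t ^ n := by
      exact intervalIntegral.integral_comp_neg (fun t => t ^ n)
    rw [h1, h2, neg_zero, integral_pow]
    rw [abs_of_nonpos hx.le, zero_pow (by omega : n + 1 ≠ 0)]
    rw [show ((0:ℝ) - (-x)^(n+1)) / (n+1) = -((-x)^(n+1)/(n+1)) by ring]
    rw [abs_neg, abs_div, abs_of_nonneg (pow_nonneg (neg_nonneg.2 hx.le) _), abs_of_pos (by positivity : (0:ℝ) < (n:ℝ)+1)]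

lemma summable_shift {f : ℕ → ℝ} (h : Summable fun k => f (k + 1)) : Summable f :=
  (summable_nat_add_iff 1).mp h

section Core

variable {a b C : ℝ} {w1 w2 : ℝ → ℂ}

lemma uIcc_subset_Ioo (ha : a < 0) (hb : 0 < b) {x : ℝ} (hx : x ∈ Set.Ioo a b) :
    Set.uIcc (0:ℝ) x ⊆ Set.Ioo a b :=
  Set.ordConnected_Ioo.uIcc_subset ⟨ha, hb⟩ hx

lemma spps_hasDerivAt (ha : a < 0) (hb : 0 < b)
    (hw1 : ContinuousOn w1 (Set.Ioo a b)) (hw2 : ContinuousOn w2 (Set.Ioo a b))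
    (n : ℕ) (hcont : ContinuousOn (spps w1 w2 n) (Set.Ioo a b))
    {x : ℝ} (hx : x ∈ Set.Ioo a b) :
    HasDerivAt (spps w1 w2 (n + 1))
      ((n + 1 : ℂ) * (spps w1 w2 n x * (if (n + 1) % 2 = 1 then w1 x else w2 x))) x := by
  set f : ℝ → ℂ := fun t => spps w1 w2 n t * (if (n + 1) % 2 = 1 then w1 t else w2 t) with hf
  have hfc : ContinuousOn f (Set.Ioo a b) := by
    apply hcont.mul
    split_ifs
    · exact hw1
    · exact hw2
  have hint : IntervalIntegrable f MeasureTheory.volume 0 x :=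
    (hfc.mono (uIcc_subset_Ioo ha hb hx)).intervalIntegrable
  have hmeas : StronglyMeasurableAtFilter f (nhds x) MeasureTheory.volume :=
    ContinuousOn.stronglyMeasurableAtFilter isOpen_Ioo hfc x hx
  have hca : ContinuousAt f x := hfc.continuousAt (isOpen_Ioo.mem_nhds hx)
  have H := (intervalIntegral.integral_hasDerivAt_right hint hmeas hca).const_mul ((n:ℂ) + 1)
  have : spps w1 w2 (n + 1) = fun y => ((n:ℂ) + 1) * ∫ t in (0:ℝ)..y, f t := rfl
  rw [this]
  exact H

lemma spps_norm_le (ha : a < 0) (hb : 0 < b) (hC : 0 ≤ C)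
    (hw1 : ContinuousOn w1 (Set.Ioo a b)) (hw2 : ContinuousOn w2 (Set.Ioo a b))
    (hbd1 : ∀ t ∈ Set.Ioo a b, ‖w1 t‖ ≤ C) (hbd2 : ∀ t ∈ Set.Ioo a b, ‖w2 t‖ ≤ C) :
    ∀ n : ℕ, ContinuousOn (spps w1 w2 n) (Set.Ioo a b) ∧
      ∀ x ∈ Set.Ioo a b, ‖spps w1 w2 n x‖ ≤ (C * |x|) ^ n := by
  intro n
  induction n with
  | zero => exact ⟨continuousOn_const, fun x _ => by simp [spps]⟩
  | succ n ih =>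
    obtain ⟨ihc, ihb⟩ := ih
    have hder := fun {x} (hx : x ∈ Set.Ioo a b) => spps_hasDerivAt ha hb hw1 hw2 n ihc hx
    constructor
    · intro x hx
      exact ((hder hx).continuousAt).continuousWithinAt
    · intro x hx
      set f : ℝ → ℂ := fun t => spps w1 w2 n t * (if (n + 1) % 2 = 1 then w1 t else w2 t) with hf
      have hfc : ContinuousOn f (Set.Ioo a b) := by
        apply ihc.mul; split_ifs; exacts [hw1, hw2]
      have key : ‖∫ t in (0:ℝ)..x, f t‖ ≤ |∫ t in (0:ℝ)..x, C ^ (n+1) * |t| ^ n| := by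
        apply intervalIntegral.norm_integral_le_abs_of_norm_le
        · rw [MeasureTheory.ae_restrict_iff' measurableSet_uIoc]
          filter_upwards with t ht
          have hts : t ∈ Set.Ioo a b :=
            uIcc_subset_Ioo ha hb hx (Set.uIoc_subset_uIcc ht)
          have htx : |t| ≤ |x| := by
            rcases Set.mem_uIcc.mp (Set.uIoc_subset_uIcc ht) with ⟨h1, h2⟩ | ⟨h1, h2⟩
            · rw [abs_of_nonneg h1]; exact le_trans h2 (le_abs_self x)
            · rw [abs_of_nonpos h2]; exact le_trans (neg_le_neg h1) (neg_le_abs x)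
          calc ‖f t‖ = ‖spps w1 w2 n t‖ * ‖(if (n + 1) % 2 = 1 then w1 t else w2 t)‖ :=
                norm_mul _ _
            _ ≤ (C * |t|) ^ n * C := by
                apply mul_le_mul (ihb t hts) _ (norm_nonneg _)
                  (by positivity)
                split_ifs; exacts [hbd1 t hts, hbd2 t hts]
            _ = C ^ (n+1) * |t| ^ n := by
                rw [mul_pow]; ring
        · exact (Continuous.intervalIntegrable (by continuity) 0 x)
      have habs : |∫ t in (0:ℝ)..x, C ^ (n+1) * |t| ^ n| = C ^ (n+1) * (|x| ^ (n+1) / (n+1)) := by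
        rw [intervalIntegral.integral_const_mul, abs_mul, abs_of_nonneg (by positivity),
          integral_abs_pow]
      have hns : ‖((n:ℂ) + 1)‖ = (n:ℝ) + 1 := by
        rw [show ((n:ℂ) + 1) = ((n+1 : ℕ) : ℂ) by push_cast; ring, Complex.norm_natCast]
        push_cast
        ring
      have : spps w1 w2 (n+1) x = ((n:ℂ)+1) * ∫ t in (0:ℝ)..x, f t := rfl
      rw [this, norm_mul, hns]
      calc ((n:ℝ)+1) * ‖∫ t in (0:ℝ)..x, f t‖
          ≤ ((n:ℝ)+1) * (C ^ (n+1) * (|x| ^ (n+1) / (n+1))) := by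
            rw [← habs]
            exact mul_le_mul_of_nonneg_left key (by positivity)
        _ = (C * |x|) ^ (n+1) := by
            rw [mul_pow]
            have hn1 : ((n:ℝ) + 1) ≠ 0 := by positivity
            field_simp

end Core

lemma summable_even_aux (r : ℝ) : Summable (fun k : ℕ => r ^ (2*k) / (2*k)!) :=
  (Real.summable_pow_div_factorial r).comp_injective (fun k l h => by omega)

lemma summable_odd_aux (r : ℝ) : Summable (fun k : ℕ => r ^ (2*k+1) / (2*k+1)!) :=
  (Real.summable_pow_div_factorial r).comp_injective (fun k l h => by omega)

lemma div_fact_aux (m F p X W : ℂ) (hm : m ≠ 0) (hF : F ≠ 0) :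
    p / (m * F) * (m * (X * W)) = W * (p / F * X) := by
  field_simp


theorem spps_ST (a b C : ℝ) (ha : a < 0) (hb : 0 < b) (ω : ℂ) (w1 w2 : ℝ → ℂ)
    (hw1 : ContinuousOn w1 (Set.Ioo a b)) (hw2 : ContinuousOn w2 (Set.Ioo a b))
    (hC : 0 ≤ C)
    (hbd1 : ∀ t ∈ Set.Ioo a b, ‖w1 t‖ ≤ C) (hbd2 : ∀ t ∈ Set.Ioo a b, ‖w2 t‖ ≤ C) :
    ∀ x ∈ Set.Ioo a b,
      HasDerivAt (fun y => ∑' k : ℕ, ω^(2*k+1)/((2*k+1)! : ℂ) * spps w1 w2 (2*k+1) y)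
        (w1 x * ∑' k : ℕ, ω^(2*k+1)/((2*k)! : ℂ) * spps w1 w2 (2*k) x) x ∧
      HasDerivAt (fun y => ∑' k : ℕ, ω^(2*k+1)/((2*k)! : ℂ) * spps w1 w2 (2*k) y)
        (ω^2 * w2 x * ∑' k : ℕ, ω^(2*k+1)/((2*k+1)! : ℂ) * spps w1 w2 (2*k+1) x) x := by
  intro x hx
  have hX := spps_norm_le ha hb hC hw1 hw2 hbd1 hbd2
  set s := Set.Ioo a b with hsdef
  set X := spps w1 w2 with hXdef
  set r := max (-a) b with hrdef
  have hr0 : 0 ≤ r := le_trans hb.le (le_max_right _ _)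
  have habs : ∀ y ∈ s, |y| ≤ r := by
    rintro y ⟨h1, h2⟩
    rw [abs_le]
    exact ⟨by simpa using le_trans (neg_le_neg (le_max_left (-a) b)) (by linarith),
      le_trans h2.le (le_max_right _ _)⟩
  have hXb : ∀ n, ∀ y ∈ s, ‖X n y‖ ≤ (C*r)^n := fun n y hy =>
    le_trans ((hX n).2 y hy)
      (pow_le_pow_left₀ (by positivity) (mul_le_mul_of_nonneg_left (habs y hy) hC) n)
  have h0s : (0:ℝ) ∈ s := ⟨ha, hb⟩
  -- zero values
  have hX0 : ∀ n : ℕ, X (n+1) 0 = 0 := by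
    intro n
    show ((n:ℂ)+1) * ∫ t in (0:ℝ)..0, _ = 0
    rw [intervalIntegral.integral_same, mul_zero]
  -- factorial facts
  have hfactC : ∀ m : ℕ, ((m)! : ℂ) ≠ 0 := fun m => by
    exact_mod_cast Nat.factorial_ne_zero m
  have hfactsucc : ∀ m : ℕ, ((m+1)! : ℂ) = (((m:ℕ):ℂ) + 1) * ((m)! : ℂ) := fun m => by
    rw [Nat.factorial_succ]; push_cast; ring
  -- the term functions
  set c : ℕ → ℝ → ℂ := fun k y => ω^(2*k+1)/((2*k+1)! : ℂ) * X (2*k+1) y with hcdef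
  set d : ℕ → ℝ → ℂ := fun k y => ω^(2*k+1)/((2*k)! : ℂ) * X (2*k) y with hddef
  set c' : ℕ → ℝ → ℂ := fun k y =>
    ω^(2*k+1)/((2*k+1)! : ℂ) * ((((2*k : ℕ) : ℂ) + 1) * (X (2*k) y * w1 y)) with hc'def
  set d' : ℕ → ℝ → ℂ := fun k y => match k with
    | 0 => 0
    | (k'+1) => ω^(2*k'+3)/((2*k'+2)! : ℂ) *
        ((((2*k'+1 : ℕ) : ℂ) + 1) * (X (2*k'+1) y * w2 y)) with hd'def
  -- derivatives of terms
  have hc : ∀ k, ∀ y ∈ s, HasDerivAt (c k) (c' k y) y := by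
    intro k y hy
    have h := spps_hasDerivAt ha hb hw1 hw2 (2*k) ((hX (2*k)).1) hy
    rw [if_pos (by omega : (2*k+1) % 2 = 1)] at h
    exact h.const_mul _
  have hd : ∀ k, ∀ y ∈ s, HasDerivAt (d k) (d' k y) y := by
    intro k y hy
    match k with
    | 0 =>
      have : d 0 = fun _ => ω^(2*0+1)/((2*0)! : ℂ) * 1 := rfl
      rw [this]
      exact hasDerivAt_const _ _
    | (k'+1) =>
      have h := spps_hasDerivAt ha hb hw1 hw2 (2*k'+1) ((hX (2*k'+1)).1) hy
      rw [if_neg (by omega : ¬ ((2*k'+1+1) % 2 = 1))] at h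
      exact h.const_mul _
  -- bounds
  set ρ := ‖ω‖ * (C * r) with hρdef
  set u1 : ℕ → ℝ := fun k => (‖ω‖ * C) * (ρ^(2*k)/(2*k)!) with hu1def
  set u2 : ℕ → ℝ := fun k => match k with
    | 0 => 0
    | (k'+1) => (‖ω‖^2 * C) * (ρ^(2*k'+1)/(2*k'+1)!) with hu2def
  have hu1 : Summable u1 := (summable_even_aux ρ).mul_left _
  have hu2 : Summable u2 := by
    apply (summable_nat_add_iff 1).mp
    exact ((summable_odd_aux ρ).mul_left (‖ω‖^2 * C)).congr fun k => rfl
  have normnat : ∀ m : ℕ, ‖((m:ℂ) + 1)‖ = (m:ℝ) + 1 := by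
    intro m
    rw [show ((m:ℂ) + 1) = ((m+1 : ℕ) : ℂ) by push_cast; ring, Complex.norm_natCast]
    push_cast
    ring
  have hfactR : ∀ m : ℕ, ((m+1)! : ℝ) = ((m:ℝ) + 1) * ((m)! : ℝ) := fun m => by
    rw [Nat.factorial_succ]; push_cast; ring
  have hb1 : ∀ k, ∀ y ∈ s, ‖c' k y‖ ≤ u1 k := by
    intro k y hy
    have e : ‖c' k y‖ = ‖ω‖^(2*k+1)/((2*k+1)! : ℝ) *
        (((2*k:ℝ) + 1) * (‖X (2*k) y‖ * ‖w1 y‖)) := by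
      simp only [hc'def, norm_mul, norm_div, norm_pow, Complex.norm_natCast, normnat]
      push_cast
      ring
    rw [e]
    have hle : ((2*k:ℝ) + 1) * (‖X (2*k) y‖ * ‖w1 y‖) ≤ ((2*k:ℝ)+1) * ((C*r)^(2*k) * C) := by
      apply mul_le_mul_of_nonneg_left _ (by positivity)
      exact mul_le_mul (hXb (2*k) y hy) (hbd1 y hy) (norm_nonneg _) (by positivity)
    calc ‖ω‖^(2*k+1)/((2*k+1)! : ℝ) * (((2*k:ℝ) + 1) * (‖X (2*k) y‖ * ‖w1 y‖))
        ≤ ‖ω‖^(2*k+1)/((2*k+1)! : ℝ) * (((2*k:ℝ)+1) * ((C*r)^(2*k) * C)) := by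
          apply mul_le_mul_of_nonneg_left hle (by positivity)
      _ = u1 k := by
          show _ = ‖ω‖ * C * (ρ^(2*k)/((2*k)! : ℝ))
          have hFne : ((2*k)! : ℝ) ≠ 0 := by positivity
          have hmne : ((2*k:ℝ) + 1) ≠ 0 := by positivity
          rw [hfactR (2*k), hρdef, mul_pow, mul_pow, pow_succ]
          push_cast at hmne ⊢
          field_simp
          ring
  have hb2 : ∀ k, ∀ y ∈ s, ‖d' k y‖ ≤ u2 k := by
    intro k y hy
    match k with
    | 0 => simp [hd'def, hu2def]
    | (k'+1) =>
      have e : ‖d' (k'+1) y‖ = ‖ω‖^(2*k'+3)/((2*k'+2)! : ℝ) *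
          (((2*k'+1:ℝ) + 1) * (‖X (2*k'+1) y‖ * ‖w2 y‖)) := by
        simp only [hd'def, norm_mul, norm_div, norm_pow, Complex.norm_natCast, normnat]
        push_cast
        ring
      rw [e]
      have hle : ((2*k'+1:ℝ) + 1) * (‖X (2*k'+1) y‖ * ‖w2 y‖) ≤
          ((2*k'+1:ℝ)+1) * ((C*r)^(2*k'+1) * C) := by
        apply mul_le_mul_of_nonneg_left _ (by positivity)
        exact mul_le_mul (hXb (2*k'+1) y hy) (hbd2 y hy) (norm_nonneg _) (by positivity)
      calc ‖ω‖^(2*k'+3)/((2*k'+2)! : ℝ) * (((2*k'+1:ℝ) + 1) * (‖X (2*k'+1) y‖ * ‖w2 y‖))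
          ≤ ‖ω‖^(2*k'+3)/((2*k'+2)! : ℝ) * (((2*k'+1:ℝ)+1) * ((C*r)^(2*k'+1) * C)) := by
            apply mul_le_mul_of_nonneg_left hle (by positivity)
        _ = u2 (k'+1) := by
            show _ = (‖ω‖^2 * C) * (ρ^(2*k'+1)/(2*k'+1)!)
            have hFne : ((2*k'+1)! : ℝ) ≠ 0 := by positivity
            have hmne : ((2*k'+1:ℝ) + 1) ≠ 0 := by positivity
            rw [show (2*k'+2)! = (2*k'+1+1)! by norm_num, hfactR (2*k'+1)]
            rw [hρdef, mul_pow, mul_pow]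
            rw [show ‖ω‖^(2*k'+3) = ‖ω‖^2 * ‖ω‖^(2*k'+1) by ring]
            push_cast at hmne ⊢
            field_simp
            ring
  -- summability at 0
  have hc0 : Summable (fun k => c k 0) := by
    apply summable_zero.congr
    intro k
    rw [hcdef]
    simp only [hX0 (2*k)]
    ring
  have hd0 : Summable (fun k => d k 0) := by
    apply (summable_nat_add_iff 1).mp
    apply summable_zero.congr
    intro k
    show (0:ℂ) = ω^(2*(k+1)+1)/((2*(k+1))! : ℂ) * X (2*(k+1)) 0
    rw [show 2*(k+1) = 2*k+1+1 by ring, hX0 (2*k+1)]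
    ring
  constructor
  · have H := hasDerivAt_tsum_of_isPreconnected hu1 isOpen_Ioo isPreconnected_Ioo
      hc hb1 h0s hc0 hx
    have hsum : (∑' k, c' k x) = w1 x * ∑' k, d k x := by
      rw [← tsum_mul_left]
      apply tsum_congr
      intro k
      show ω^(2*k+1)/((2*k+1)! : ℂ) * ((((2*k : ℕ) : ℂ) + 1) * (X (2*k) x * w1 x)) =
        w1 x * (ω^(2*k+1)/((2*k)! : ℂ) * X (2*k) x)
      rw [hfactsucc (2*k)]
      exact div_fact_aux _ _ _ _ _ (Nat.cast_add_one_ne_zero (2*k)) (hfactC (2*k))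
    rw [hsum] at H
    exact H
  · have H := hasDerivAt_tsum_of_isPreconnected hu2 isOpen_Ioo isPreconnected_Ioo
      hd hb2 h0s hd0 hx
    have hsum : (∑' k, d' k x) = ω^2 * w2 x * ∑' k, c k x := by
      have hsummable : Summable (fun k => d' k x) :=
        Summable.of_norm_bounded hu2 (fun k => hb2 k x hx)
      rw [hsummable.tsum_eq_zero_add]
      have h00 : d' 0 x = 0 := rfl
      rw [h00, zero_add]
      have : ∀ k : ℕ, d' (k+1) x = (ω^2 * w2 x) * c k x := by
        intro k
        show ω^(2*k+3)/((2*k+2)! : ℂ) * ((((2*k+1 : ℕ) : ℂ) + 1) * (X (2*k+1) x * w2 x)) =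
          (ω^2 * w2 x) * (ω^(2*k+1)/((2*k+1)! : ℂ) * X (2*k+1) x)
        rw [show (2*k+2)! = (2*k+1+1)! by norm_num, hfactsucc (2*k+1)]
        rw [div_fact_aux _ _ _ _ _ (Nat.cast_add_one_ne_zero (2*k+1)) (hfactC (2*k+1))]
        rw [show ω^(2*k+3) = ω^2 * ω^(2*k+1) by ring]
        ring
      rw [tsum_congr this, tsum_mul_left, mul_assoc]
    rw [hsum] at H
    exact H

/-- The SPPS series `u₂ = g₀ ∑_{odd n} ωⁿ/n! X⁽ⁿ⁾` solves `-u₂'' + q u₂ + ω² u₂ = 0`,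
where `X⁽ⁿ⁾` has weight `g₀⁻²` for odd `n` and `g₀²` for even `n`. -/
theorem spps_u2_solution (a b : ℝ) (ha : a < 0) (hb : 0 < b) (ω : ℂ)
    (q g0 : ℝ → ℂ)
    (hq : ContinuousOn q (Set.Ioo a b))
    (hg : ContDiffOn ℝ 2 g0 (Set.Ioo a b))
    (hg0 : ∀ x ∈ Set.Ioo a b, g0 x ≠ 0)
    (heq : ∀ x ∈ Set.Ioo a b, deriv (deriv g0) x = q x * g0 x)
    (hbd : ∃ M : ℝ, ∀ x ∈ Set.Ioo a b, ‖g0 x‖ ≤ M ∧ ‖(g0 x)⁻¹‖ ≤ M) :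
    ∀ x ∈ Set.Ioo a b,
      -(deriv (deriv (fun y => g0 y * ∑' k : ℕ,
          ω ^ (2 * k + 1) / ((2 * k + 1)! : ℂ) *
            spps (fun t => (g0 t ^ 2)⁻¹) (fun t => g0 t ^ 2) (2 * k + 1) y)) x) +
        q x * (g0 x * ∑' k : ℕ,
          ω ^ (2 * k + 1) / ((2 * k + 1)! : ℂ) *
            spps (fun t => (g0 t ^ 2)⁻¹) (fun t => g0 t ^ 2) (2 * k + 1) x) +
        ω ^ 2 * (g0 x * ∑' k : ℕ,
          ω ^ (2 * k + 1) / ((2 * k + 1)! : ℂ) *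
            spps (fun t => (g0 t ^ 2)⁻¹) (fun t => g0 t ^ 2) (2 * k + 1) x) = 0 := by
  intro x hx
  obtain ⟨M, hM⟩ := hbd
  set s := Set.Ioo a b with hsdef
  set w1 : ℝ → ℂ := fun t => (g0 t ^ 2)⁻¹ with hw1def
  set w2 : ℝ → ℂ := fun t => g0 t ^ 2 with hw2def
  have hgc : ContinuousOn g0 s := hg.continuousOn
  have hw2c : ContinuousOn w2 s := hgc.pow 2
  have hw1c : ContinuousOn w1 s := hw2c.inv₀ (fun t ht => pow_ne_zero 2 (hg0 t ht))
  set C := M^2 with hCdef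
  have hC : 0 ≤ C := sq_nonneg M
  have hbd1 : ∀ t ∈ s, ‖w1 t‖ ≤ C := by
    intro t ht
    have e : w1 t = ((g0 t)⁻¹)^2 := by rw [inv_pow]
    rw [e, norm_pow]
    exact pow_le_pow_left₀ (norm_nonneg _) (hM t ht).2 2
  have hbd2 : ∀ t ∈ s, ‖w2 t‖ ≤ C := by
    intro t ht
    rw [show w2 t = g0 t ^ 2 from rfl, norm_pow]
    exact pow_le_pow_left₀ (norm_nonneg _) (hM t ht).1 2
  have ST := spps_ST a b C ha hb ω w1 w2 hw1c hw2c hC hbd1 hbd2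
  -- shortcuts
  set S : ℝ → ℂ := fun y => ∑' k : ℕ,
    ω ^ (2 * k + 1) / ((2 * k + 1)! : ℂ) * spps w1 w2 (2 * k + 1) y with hSdef
  set T : ℝ → ℂ := fun y => ∑' k : ℕ,
    ω ^ (2 * k + 1) / ((2 * k)! : ℂ) * spps w1 w2 (2 * k) y with hTdef
  have hST : ∀ y ∈ s, HasDerivAt S (w1 y * T y) y ∧ HasDerivAt T (ω^2 * w2 y * S y) y :=
    fun y hy => ST y hy
  -- g0 derivatives
  have hgd : ∀ y ∈ s, HasDerivAt g0 (deriv g0 y) y := fun y hy =>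
    ((hg.differentiableOn (by norm_num)).differentiableAt (isOpen_Ioo.mem_nhds hy)).hasDerivAt
  have hgd2 : HasDerivAt (deriv g0) (q x * g0 x) x := by
    have h1 : ContDiffOn ℝ 1 (deriv g0) s :=
      hg.deriv_of_isOpen isOpen_Ioo (by norm_num)
    have h2 := ((h1.differentiableOn (by norm_num)).differentiableAt
      (isOpen_Ioo.mem_nhds hx)).hasDerivAt
    rwa [heq x hx] at h2
  -- first derivative of u on s
  have Hu : ∀ y ∈ s, HasDerivAt (fun z => g0 z * S z)
      (deriv g0 y * S y + T y / g0 y) y := by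
    intro y hy
    have h := (hgd y hy).mul (hST y hy).1
    have e : g0 y * (w1 y * T y) = T y / g0 y := by
      rw [show w1 y = (g0 y ^ 2)⁻¹ from rfl]
      field_simp [hg0 y hy]
    rwa [e] at h
  have hloc : deriv (fun z => g0 z * S z) =ᶠ[nhds x]
      fun y => deriv g0 y * S y + T y / g0 y := by
    filter_upwards [isOpen_Ioo.mem_nhds hx] with y hy using (Hu y hy).deriv
  have Hd2 : HasDerivAt (fun y => deriv g0 y * S y + T y / g0 y)
      (q x * g0 x * S x + deriv g0 x * (w1 x * T x) +
        (ω^2 * w2 x * S x * g0 x - T x * deriv g0 x) / g0 x ^ 2) x :=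
    (hgd2.mul (hST x hx).1).add ((hST x hx).2.div (hgd x hx) (hg0 x hx))
  have hderiv2 : deriv (deriv (fun z => g0 z * S z)) x =
      q x * g0 x * S x + deriv g0 x * (w1 x * T x) +
        (ω^2 * w2 x * S x * g0 x - T x * deriv g0 x) / g0 x ^ 2 := by
    rw [Filter.EventuallyEq.deriv_eq hloc]
    exact Hd2.deriv
  show -(deriv (deriv (fun y => g0 y * S y)) x) + q x * (g0 x * S x) + ω^2 * (g0 x * S x) = 0
  rw [hderiv2]
  rw [show w1 x = (g0 x ^ 2)⁻¹ from rfl, show w2 x = g0 x ^ 2 from rfl]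
  field_simp [hg0 x hx]
  ring
end

section
/- Let $p$ be nonvanishing $C^1$, $q$ continuous, and $g_0$ a nonvanishing $C^2$ solution of $(p g_0')' + q g_0 = 0$ on a bounded interval $I$ containing $0$, with $g_0$, $1/g_0$, $p$, $1/p$ bounded. Define $\widetilde{X}^{(0)} \equiv 1$, $\widetilde{X}^{(n)}(x) = n\int_0^x \widetilde{X}^{(n-1)} g_0^2$ for odd $n$, $\widetilde{X}^{(n)}(x) = n\int_0^x \widetilde{X}^{(n-1)} (p g_0^2)^{-1}$ for even $n$. Then $u_1 = g_0 \sum_{\text{even } n \geq 0} \frac{\omega^n}{n!} \widetilde{X}^{(n)}$ solves $(p u_1')' + q u_1 = \omega^2 u_1$ on $I$ for every $\omega \in \mathbb{C}$. -/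
open scoped Nat

lemma spps_succ (wo we : ℝ → ℂ) (n : ℕ) (x : ℝ) :
    spps wo we (n+1) x = ((n:ℂ) + 1) *
      ∫ t in (0:ℝ)..x, spps wo we n t * (if (n + 1) % 2 = 1 then wo t else we t) := rfl

lemma spps_cont (wo we : ℝ → ℂ) (hwo : Continuous wo) (hwe : Continuous we) :
    ∀ n, Continuous (spps wo we n)
  | 0 => continuous_const
  | (n+1) => by
      have h := spps_cont wo we hwo hwe n
      have hc : Continuous fun t => spps wo we n t * (if (n + 1) % 2 = 1 then wo t else we t) := by
        split_ifs
        exacts [h.mul hwo, h.mul hwe]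
      have : Continuous fun x => ∫ t in (0:ℝ)..x, spps wo we n t *
          (if (n + 1) % 2 = 1 then wo t else we t) := by
        refine continuous_iff_continuousAt.2 fun x => ?_
        exact ((hc.integral_hasStrictDerivAt 0 x).hasDerivAt).continuousAt
      exact continuous_const.mul this

lemma spps_hasDerivAt_s6 (wo we : ℝ → ℂ) (hwo : Continuous wo) (hwe : Continuous we)
    (n : ℕ) (x : ℝ) :
    HasDerivAt (spps wo we (n+1))
      (((n:ℂ) + 1) * (spps wo we n x * (if (n + 1) % 2 = 1 then wo x else we x))) x := by
  have h := spps_cont wo we hwo hwe n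
  have hc : Continuous fun t => spps wo we n t * (if (n + 1) % 2 = 1 then wo t else we t) := by
    split_ifs
    exacts [h.mul hwo, h.mul hwe]
  exact ((hc.integral_hasStrictDerivAt 0 x).hasDerivAt).const_mul _


lemma abs_integral_abs_pow (n : ℕ) (x : ℝ) :
    |∫ t in (0:ℝ)..x, |t| ^ n| = |x| ^ (n+1) / (n+1) := by
  rcases le_or_gt 0 x with hx | hx
  · have h1 : (∫ t in (0:ℝ)..x, |t| ^ n) = ∫ t in (0:ℝ)..x, t ^ n := by
      refine intervalIntegral.integral_congr fun t ht => ?_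
      rw [Set.uIcc_of_le hx] at ht
      rw [abs_of_nonneg ht.1]
    rw [h1, integral_pow, abs_of_nonneg
        (div_nonneg (by simpa using pow_nonneg hx (n+1)) (by positivity)),
      abs_of_nonneg hx]
    ring
  · have h1 : (∫ t in (0:ℝ)..x, |t| ^ n) = ∫ t in (0:ℝ)..x, (-t) ^ n := by
      refine intervalIntegral.integral_congr fun t ht => ?_
      rw [Set.uIcc_of_ge hx.le] at ht
      rw [abs_of_nonpos ht.2]
    have h2 : (∫ t in (0:ℝ)..x, (-t) ^ n) = ∫ t in (-x)..(-(0:ℝ)), t ^ n :=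
      intervalIntegral.integral_comp_neg (fun t => t ^ n)
    rw [h1, h2, integral_pow, abs_of_nonpos hx.le]
    have hxn : (0:ℝ) ≤ (-x) ^ (n+1) := pow_nonneg (by linarith) _
    rw [show ((-(0:ℝ)) ^ (n + 1) - (-x) ^ (n + 1)) = -((-x)^(n+1)) by
        simp [zero_pow (Nat.succ_ne_zero n)],
      abs_div, abs_neg, abs_of_nonneg hxn, abs_of_nonneg (by positivity)]

lemma spps_norm_le_s6 (wo we : ℝ → ℂ) (M : ℝ) (hbo : ∀ t, ‖wo t‖ ≤ M) (hbe : ∀ t, ‖we t‖ ≤ M) :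
    ∀ n x, ‖spps wo we n x‖ ≤ (M * |x|) ^ n := by
  have hM : 0 ≤ M := le_trans (norm_nonneg _) (hbo 0)
  intro n
  induction n with
  | zero => intro x; simp [spps]
  | succ n ih =>
    intro x
    rw [spps_succ]
    have hw : ∀ t, ‖(if (n + 1) % 2 = 1 then wo t else we t)‖ ≤ M := by
      intro t; split_ifs; exacts [hbo t, hbe t]
    have hbound : ∀ t, ‖spps wo we n t * (if (n + 1) % 2 = 1 then wo t else we t)‖
        ≤ M ^ (n+1) * |t| ^ n := by
      intro t
      rw [norm_mul]
      calc ‖spps wo we n t‖ * ‖(if (n + 1) % 2 = 1 then wo t else we t)‖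
          ≤ (M * |t|) ^ n * M := by
            refine mul_le_mul (ih t) (hw t) (norm_nonneg _) (by positivity)
        _ = M ^ (n+1) * |t| ^ n := by rw [mul_pow]; ring
    have hgi : IntervalIntegrable (fun t => M ^ (n+1) * |t| ^ n) MeasureTheory.volume 0 x :=
      (Continuous.intervalIntegrable (by continuity) 0 x)
    have hle : ‖∫ t in (0:ℝ)..x, spps wo we n t * (if (n + 1) % 2 = 1 then wo t else we t)‖
        ≤ |∫ t in (0:ℝ)..x, M ^ (n+1) * |t| ^ n| :=
      intervalIntegral.norm_integral_le_abs_of_norm_le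
        (Filter.Eventually.of_forall fun t => hbound t) hgi
    have hval : |∫ t in (0:ℝ)..x, M ^ (n+1) * |t| ^ n| = M ^ (n+1) * (|x| ^ (n+1) / (n+1)) := by
      rw [intervalIntegral.integral_const_mul, abs_mul, abs_of_nonneg (by positivity),
        abs_integral_abs_pow]
    rw [norm_mul]
    have hnn : ‖((n:ℂ) + 1)‖ = (n:ℝ) + 1 := by
      rw [show ((n:ℂ) + 1) = ((n+1 : ℕ) : ℂ) by push_cast; ring, Complex.norm_natCast]
      push_cast; ring
    calc ‖((n:ℂ) + 1)‖ * ‖∫ t in (0:ℝ)..x, spps wo we n t *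
            (if (n + 1) % 2 = 1 then wo t else we t)‖
        ≤ ((n:ℝ) + 1) * (M ^ (n+1) * (|x| ^ (n+1) / (n+1))) := by
          rw [hnn]
          exact mul_le_mul_of_nonneg_left (le_trans hle (le_of_eq hval)) (by positivity)
      _ = (M * |x|) ^ (n+1) := by
          rw [mul_pow]
          field_simp


lemma summable_even_pow_div_factorial (v : ℝ) :
    Summable (fun k : ℕ => v ^ (2*k) / (2*k)!) := by
  have h := Real.summable_pow_div_factorial v
  exact h.comp_injective (fun a b h => by omega)

lemma nat_le_four_pow (k : ℕ) : ((2*k : ℕ) : ℝ) ≤ 4 ^ (2*k) := by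
  have h : 2*k < 2 ^ (2*k) := Nat.lt_two_pow_self
  have h2 : (2:ℕ) ^ (2*k) ≤ 4 ^ (2*k) := Nat.pow_le_pow_left (by norm_num) _
  exact_mod_cast le_of_lt (lt_of_lt_of_le h h2)

lemma nat_sq_le_four_pow (k : ℕ) : ((2*k : ℕ) : ℝ) * ((2*k - 1 : ℕ) : ℝ) ≤ 4 ^ (2*k) := by
  have h : (2*k) * (2*k - 1) ≤ (2^(2*k)) * (2^(2*k)) := by
    exact Nat.mul_le_mul (le_of_lt Nat.lt_two_pow_self)
      (le_trans (Nat.sub_le _ _) (le_of_lt Nat.lt_two_pow_self))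
  have h2 : (2:ℕ)^(2*k) * 2^(2*k) = 4 ^ (2*k) := by
    rw [← Nat.mul_pow]
  rw [h2] at h
  exact_mod_cast h

lemma prod_bound (w k' : ℝ) (hw : 0 ≤ w) (hk' : 1 ≤ k') (m : ℝ) (k : ℕ)
    (hm0 : 0 ≤ m) (hm : m ≤ 4 ^ (2*k)) :
    w ^ (2*k) * m * k' ^ (2*k) ≤ (4*(w+1)*k') ^ (2*k) := by
  have hk0 : (0:ℝ) ≤ k' := le_trans zero_le_one hk'
  calc w ^ (2*k) * m * k' ^ (2*k)
      ≤ (w+1) ^ (2*k) * 4 ^ (2*k) * k' ^ (2*k) := by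
        refine mul_le_mul_of_nonneg_right ?_ (by positivity)
        exact mul_le_mul (pow_le_pow_left₀ hw (by linarith) _) hm hm0
          (by positivity)
    _ = (4*(w+1)*k') ^ (2*k) := by rw [mul_pow, mul_pow]; ring

section series

variable (wo we : ℝ → ℂ) (ω : ℂ) (K : ℝ) (a' b' : ℝ)

lemma term_norm (k : ℕ) : ‖ω^(2*k)/((2*k)! : ℂ)‖ = ‖ω‖^(2*k)/((2*k)! : ℝ) := by
  rw [norm_div, norm_pow, Complex.norm_natCast]

lemma spps_S_summable (hK : 1 ≤ K)
    (hXb : ∀ n, ∀ y ∈ Set.Ioo a' b', ‖spps wo we n y‖ ≤ K ^ n)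
    (y : ℝ) (hy : y ∈ Set.Ioo a' b') :
    Summable (fun k : ℕ => ω^(2*k)/((2*k)! : ℂ) * spps wo we (2*k) y) := by
  refine Summable.of_norm_bounded (g := fun k => (4*(‖ω‖+1)*K)^(2*k) / (2*k)!)
    (summable_even_pow_div_factorial _) fun k => ?_
  rw [norm_mul, term_norm]
  calc ‖ω‖^(2*k)/((2*k)! : ℝ) * ‖spps wo we (2*k) y‖
      ≤ ‖ω‖^(2*k)/((2*k)! : ℝ) * K ^ (2*k) := by
        gcongr
        exact hXb _ y hy
    _ ≤ (4*(‖ω‖+1)*K)^(2*k) / (2*k)! := by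
        rw [div_mul_eq_mul_div]
        gcongr
        calc ‖ω‖^(2*k) * K^(2*k) = (‖ω‖ * K)^(2*k) := by rw [mul_pow]
          _ ≤ (4*(‖ω‖+1)*K)^(2*k) := by
              refine pow_le_pow_left₀ (by positivity) ?_ _
              nlinarith [norm_nonneg ω, le_trans zero_le_one hK]

lemma spps_T_summable (hK : 1 ≤ K)
    (hXb : ∀ n, ∀ y ∈ Set.Ioo a' b', ‖spps wo we n y‖ ≤ K ^ n)
    (y : ℝ) (hy : y ∈ Set.Ioo a' b') :
    Summable (fun k : ℕ => ω^(2*k)/((2*k)! : ℂ) * ((2*k : ℕ) : ℂ) * spps wo we (2*k-1) y) := by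
  refine Summable.of_norm_bounded (g := fun k => (4*(‖ω‖+1)*K)^(2*k) / (2*k)!)
    (summable_even_pow_div_factorial _) fun k => ?_
  rw [norm_mul, norm_mul, term_norm, Complex.norm_natCast]
  calc ‖ω‖^(2*k)/((2*k)! : ℝ) * ((2*k : ℕ) : ℝ) * ‖spps wo we (2*k-1) y‖
      ≤ ‖ω‖^(2*k)/((2*k)! : ℝ) * ((2*k : ℕ) : ℝ) * K ^ (2*k) := by
        gcongr
        exact le_trans (hXb _ y hy)
            (pow_le_pow_right₀ hK (Nat.sub_le _ _))
    _ ≤ (4*(‖ω‖+1)*K)^(2*k) / (2*k)! := by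
        rw [div_mul_eq_mul_div, div_mul_eq_mul_div]
        gcongr
        exact prod_bound ‖ω‖ K (norm_nonneg _) hK _ k (Nat.cast_nonneg _) (nat_le_four_pow k)

end series

section series2
variable (wo we : ℝ → ℂ) (ω : ℂ) (K : ℝ) (a' b' : ℝ)

lemma spps_S_hasDerivAt (hwo : Continuous wo) (hwe : Continuous we) (hK : 1 ≤ K)
    (hab : a' < b')
    (hXb : ∀ n, ∀ y ∈ Set.Ioo a' b', ‖spps wo we n y‖ ≤ K ^ n)
    (hwob : ∀ y ∈ Set.Ioo a' b', ‖wo y‖ ≤ K) (hweb : ∀ y ∈ Set.Ioo a' b', ‖we y‖ ≤ K)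
    (y : ℝ) (hy : y ∈ Set.Ioo a' b') :
    HasDerivAt (fun z => ∑' k : ℕ, ω^(2*k)/((2*k)! : ℂ) * spps wo we (2*k) z)
      ((∑' k : ℕ, ω^(2*k)/((2*k)! : ℂ) * ((2*k : ℕ) : ℂ) * spps wo we (2*k-1) y) * we y)
      y := by
  have hder : ∀ (k : ℕ) (z : ℝ), z ∈ Set.Ioo a' b' →
      HasDerivAt (fun z => ω^(2*k)/((2*k)! : ℂ) * spps wo we (2*k) z)
        (ω^(2*k)/((2*k)! : ℂ) * ((2*k : ℕ) : ℂ) * spps wo we (2*k-1) z * we z) z := by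
    rintro (_ | j) z hz
    · have h0 : (fun z : ℝ => ω^(2*0)/((2*0)! : ℂ) * spps wo we (2*0) z)
          = fun _ => ω^(2*0)/((2*0)! : ℂ) * 1 := by
        funext z; rfl
      have hv : ω^(2*0)/((2*0)! : ℂ) * ((2*0 : ℕ) : ℂ) * spps wo we (2*0-1) z * we z = 0 := by
        norm_num
      rw [h0, hv]
      exact hasDerivAt_const _ _
    · have h1 : 2*(j+1) = (2*j+1)+1 := by ring
      have H := (spps_hasDerivAt_s6 wo we hwo hwe (2*j+1) z).const_mul
        (ω^(2*(j+1))/((2*(j+1))! : ℂ))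
      rw [if_neg (by omega)] at H
      rw [h1]
      simp only [Nat.add_sub_cancel]
      refine H.congr_deriv (Eq.symm ?_)
      push_cast
      ring
  have hbound : ∀ (k : ℕ) (z : ℝ), z ∈ Set.Ioo a' b' →
      ‖ω^(2*k)/((2*k)! : ℂ) * ((2*k : ℕ) : ℂ) * spps wo we (2*k-1) z * we z‖
        ≤ (4*(‖ω‖+1)*K)^(2*k) / (2*k)! := by
    rintro (_ | j) z hz
    · simp
    · rw [norm_mul, norm_mul, norm_mul, term_norm, Complex.norm_natCast]
      have h2 : 2*(j+1) - 1 = 2*j+1 := by omega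
      calc ‖ω‖^(2*(j+1))/((2*(j+1))! : ℝ) * ((2*(j+1) : ℕ) : ℝ) *
              ‖spps wo we (2*(j+1)-1) z‖ * ‖we z‖
          ≤ ‖ω‖^(2*(j+1))/((2*(j+1))! : ℝ) * ((2*(j+1) : ℕ) : ℝ) * K^(2*j+1) * K := by
            gcongr
            · rw [h2]; exact hXb _ z hz
            · exact hweb z hz
            
        _ = ‖ω‖^(2*(j+1)) * ((2*(j+1) : ℕ) : ℝ) * K^(2*(j+1)) / (2*(j+1))! := by
            rw [show 2*(j+1) = (2*j+1)+1 by ring, pow_succ K]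
            ring
        _ ≤ (4*(‖ω‖+1)*K)^(2*(j+1)) / (2*(j+1))! := by
            gcongr
            exact prod_bound ‖ω‖ K (norm_nonneg _) hK _ _ (Nat.cast_nonneg _) (nat_le_four_pow _)
  have H := hasDerivAt_tsum_of_isPreconnected
    (summable_even_pow_div_factorial (4*(‖ω‖+1)*K)) isOpen_Ioo
    (isPreconnected_Ioo) hder hbound hy
    (spps_S_summable wo we ω K a' b' hK hXb y hy) hy
  refine H.congr_deriv (Eq.symm ?_)
  exact (tsum_mul_right).symm

end series2

section series3
variable (wo we : ℝ → ℂ) (ω : ℂ) (K : ℝ) (a' b' : ℝ)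

lemma fact_identity (ω : ℂ) (k : ℕ) :
    ω^(2*(k+1))/((2*(k+1))! : ℂ) * ((2*(k+1) : ℕ) : ℂ) * ((2*(k+1)-1 : ℕ) : ℂ)
      = ω^2 * (ω^(2*k)/((2*k)! : ℂ)) := by
  have h1 : 2*(k+1) = (2*k+1)+1 := by ring
  have h2 : 2*(k+1)-1 = 2*k+1 := by omega
  rw [h1]
  simp only [Nat.add_sub_cancel]
  have hf : ((2*k)! : ℂ) ≠ 0 := Nat.cast_ne_zero.mpr (Nat.factorial_ne_zero _)
  have hc1 : ((2*k+1 : ℕ) : ℂ) ≠ 0 := Nat.cast_ne_zero.mpr (by omega)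
  have hc2 : ((2*k+1+1 : ℕ) : ℂ) ≠ 0 := Nat.cast_ne_zero.mpr (by omega)
  have hfac : ((2*k+1+1)! : ℂ) = ((2*k+1+1 : ℕ) : ℂ) * (((2*k+1 : ℕ) : ℂ) * ((2*k)! : ℂ)) := by
    rw [Nat.factorial_succ, Nat.factorial_succ]
    push_cast
    ring
  rw [hfac, div_mul_eq_mul_div, div_mul_eq_mul_div, ← mul_div_assoc,
    div_eq_div_iff (mul_ne_zero hc2 (mul_ne_zero hc1 hf)) hf]
  ring

lemma spps_T_hasDerivAt (hwo : Continuous wo) (hwe : Continuous we) (hK : 1 ≤ K)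
    (hXb : ∀ n, ∀ y ∈ Set.Ioo a' b', ‖spps wo we n y‖ ≤ K ^ n)
    (hwob : ∀ y ∈ Set.Ioo a' b', ‖wo y‖ ≤ K)
    (y : ℝ) (hy : y ∈ Set.Ioo a' b') :
    HasDerivAt (fun z => ∑' k : ℕ, ω^(2*k)/((2*k)! : ℂ) * ((2*k : ℕ) : ℂ) * spps wo we (2*k-1) z)
      (ω^2 * (∑' k : ℕ, ω^(2*k)/((2*k)! : ℂ) * spps wo we (2*k) y) * wo y) y := by
  have hder : ∀ (k : ℕ) (z : ℝ), z ∈ Set.Ioo a' b' →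
      HasDerivAt (fun z => ω^(2*k)/((2*k)! : ℂ) * ((2*k : ℕ) : ℂ) * spps wo we (2*k-1) z)
        (ω^(2*k)/((2*k)! : ℂ) * ((2*k : ℕ) : ℂ) * ((2*k-1 : ℕ) : ℂ)
          * spps wo we (2*k-2) z * wo z) z := by
    rintro (_ | j) z hz
    · have h0 : (fun z : ℝ => ω^(2*0)/((2*0)! : ℂ) * ((2*0 : ℕ) : ℂ) * spps wo we (2*0-1) z)
          = fun _ => (0:ℂ) := by
        funext z; norm_num
      have hv : ω^(2*0)/((2*0)! : ℂ) * ((2*0 : ℕ) : ℂ) * ((2*0-1 : ℕ) : ℂ)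
          * spps wo we (2*0-2) z * wo z = 0 := by norm_num
      rw [h0, hv]
      exact hasDerivAt_const _ _
    · have h1 : 2*(j+1) - 1 = (2*j)+1 := by omega
      have H := (spps_hasDerivAt_s6 wo we hwo hwe (2*j) z).const_mul
        (ω^(2*(j+1))/((2*(j+1))! : ℂ) * ((2*(j+1) : ℕ) : ℂ))
      rw [if_pos (by omega)] at H
      have h2 : 2*(j+1) - 2 = 2*j := by omega
      rw [h1, h2]
      refine H.congr_deriv (Eq.symm ?_)
      push_cast
      ring
  have hbound : ∀ (k : ℕ) (z : ℝ), z ∈ Set.Ioo a' b' →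
      ‖ω^(2*k)/((2*k)! : ℂ) * ((2*k : ℕ) : ℂ) * ((2*k-1 : ℕ) : ℂ)
          * spps wo we (2*k-2) z * wo z‖
        ≤ (4*(‖ω‖+1)*K)^(2*k) / (2*k)! := by
    rintro (_ | j) z hz
    · simp
    · rw [norm_mul, norm_mul, norm_mul, norm_mul, term_norm, Complex.norm_natCast,
        Complex.norm_natCast]
      have h2 : 2*(j+1) - 2 = 2*j := by omega
      have hK0 : (0:ℝ) ≤ K := le_trans zero_le_one hK
      calc ‖ω‖^(2*(j+1))/((2*(j+1))! : ℝ) * ((2*(j+1) : ℕ) : ℝ) * ((2*(j+1)-1 : ℕ) : ℝ) *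
              ‖spps wo we (2*(j+1)-2) z‖ * ‖wo z‖
          ≤ ‖ω‖^(2*(j+1))/((2*(j+1))! : ℝ) * ((2*(j+1) : ℕ) : ℝ) * ((2*(j+1)-1 : ℕ) : ℝ)
              * K^(2*j) * K := by
            gcongr
            · rw [show (2*(j+1)-2 : ℕ) = 2*j from by omega]; exact hXb _ z hz
            · exact hwob z hz

        _ ≤ ‖ω‖^(2*(j+1)) * (((2*(j+1) : ℕ) : ℝ) * ((2*(j+1)-1 : ℕ) : ℝ)) * K^(2*(j+1))
              / (2*(j+1))! := by
            rw [show 2*(j+1) = (2*j+1)+1 by ring]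
            rw [pow_succ K (2*j+1), pow_succ K (2*j)]
            have : K^(2*j) * K ≤ K^(2*j) * K * K :=
              le_mul_of_one_le_right (by positivity) hK
            calc ‖ω‖^(2*j+1+1)/((2*j+1+1)! : ℝ) * ((2*(j+1) : ℕ) : ℝ) * ((2*(j+1)-1 : ℕ) : ℝ)
                  * K^(2*j) * K
                ≤ ‖ω‖^(2*j+1+1)/((2*j+1+1)! : ℝ) * ((2*(j+1) : ℕ) : ℝ) * ((2*(j+1)-1 : ℕ) : ℝ)
                  * (K^(2*j) * K * K) := by
                  rw [mul_assoc _ (K^(2*j)) K]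
                  gcongr
              _ = ‖ω‖^(2*j+1+1) * (((2*(j+1) : ℕ) : ℝ) * ((2*(j+1)-1 : ℕ) : ℝ))
                  * (K^(2*j) * K * K) / (2*j+1+1)! := by ring
        _ ≤ (4*(‖ω‖+1)*K)^(2*(j+1)) / (2*(j+1))! := by
            gcongr
            exact prod_bound ‖ω‖ K (norm_nonneg _) hK _ _ (by positivity)
              (nat_sq_le_four_pow _)
  have hsum0 : Summable (fun k : ℕ => ω^(2*k)/((2*k)! : ℂ) * ((2*k : ℕ) : ℂ)
      * spps wo we (2*k-1) y) := spps_T_summable wo we ω K a' b' hK hXb y hy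
  have H := hasDerivAt_tsum_of_isPreconnected
    (summable_even_pow_div_factorial (4*(‖ω‖+1)*K)) isOpen_Ioo
    (isPreconnected_Ioo) hder hbound hy hsum0 hy
  refine H.congr_deriv (Eq.symm ?_)
  have hFsum : Summable (fun k : ℕ => ω^(2*k)/((2*k)! : ℂ) * ((2*k : ℕ) : ℂ) * ((2*k-1 : ℕ) : ℂ)
      * spps wo we (2*k-2) y * wo y) :=
    Summable.of_norm_bounded (summable_even_pow_div_factorial (4*(‖ω‖+1)*K))
      (fun k => hbound k y hy)
  rw [Summable.tsum_eq_zero_add hFsum]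
  have h0 : ω^(2*0)/((2*0)! : ℂ) * ((2*0 : ℕ) : ℂ) * ((2*0-1 : ℕ) : ℂ)
      * spps wo we (2*0-2) y * wo y = 0 := by norm_num
  rw [h0, zero_add]
  symm
  have hterm : ∀ k : ℕ, ω^(2*(k+1))/((2*(k+1))! : ℂ) * ((2*(k+1) : ℕ) : ℂ)
      * ((2*(k+1)-1 : ℕ) : ℂ) * spps wo we (2*(k+1)-2) y * wo y
      = ω^2 * (ω^(2*k)/((2*k)! : ℂ) * spps wo we (2*k) y * wo y) := by
    intro k
    rw [show (2*(k+1)-2 : ℕ) = 2*k from by omega, fact_identity]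
    ring
  calc (∑' k : ℕ, ω^(2*(k+1))/((2*(k+1))! : ℂ) * ((2*(k+1) : ℕ) : ℂ)
          * ((2*(k+1)-1 : ℕ) : ℂ) * spps wo we (2*(k+1)-2) y * wo y)
      = ∑' k : ℕ, ω^2 * (ω^(2*k)/((2*k)! : ℂ) * spps wo we (2*k) y * wo y) :=
        tsum_congr hterm
    _ = ω^2 * ∑' k : ℕ, ω^(2*k)/((2*k)! : ℂ) * spps wo we (2*k) y * wo y := tsum_mul_left
    _ = ω^2 * ((∑' k : ℕ, ω^(2*k)/((2*k)! : ℂ) * spps wo we (2*k) y) * wo y) := by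
        rw [tsum_mul_right]
    _ = ω^2 * (∑' k : ℕ, ω^(2*k)/((2*k)! : ℂ) * spps wo we (2*k) y) * wo y := by ring

end series3

lemma spps_congr (wo we Wo We : ℝ → ℂ) (a' b' : ℝ)
    (h0 : (0:ℝ) ∈ Set.Icc a' b')
    (ho : Set.EqOn wo Wo (Set.Icc a' b')) (he : Set.EqOn we We (Set.Icc a' b')) :
    ∀ n, ∀ y ∈ Set.Icc a' b', spps wo we n y = spps Wo We n y := by
  intro n
  induction n with
  | zero => intro y _; rfl
  | succ n ih =>
    intro y hy
    show ((n:ℂ)+1) * _ = ((n:ℂ)+1) * _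
    congr 1
    refine intervalIntegral.integral_congr fun t ht => ?_
    have htI : t ∈ Set.Icc a' b' := Set.uIcc_subset_Icc h0 hy ht
    rw [ih t htI]
    congr 1
    split_ifs
    exacts [ho htI, he htI]

set_option maxHeartbeats 1000000 in
/-- `u₁ = g₀ ∑_{even n} ωⁿ/n! X̃⁽ⁿ⁾` solves `(p u₁')' + q u₁ = ω² u₁`, where `X̃⁽ⁿ⁾`
has weight `g₀²` for odd `n` and `(p g₀²)⁻¹` for even `n`. -/
theorem spps_u1_sturm_liouville (a b : ℝ) (ha : a < 0) (hb : 0 < b) (ω : ℂ)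
    (p q g0 : ℝ → ℂ)
    (hp : ContDiffOn ℝ 1 p (Set.Ioo a b))
    (hp0 : ∀ x ∈ Set.Ioo a b, p x ≠ 0)
    (hq : ContinuousOn q (Set.Ioo a b))
    (hg : ContDiffOn ℝ 2 g0 (Set.Ioo a b))
    (hg0 : ∀ x ∈ Set.Ioo a b, g0 x ≠ 0)
    (heq : ∀ x ∈ Set.Ioo a b,
      deriv (fun y => p y * deriv g0 y) x + q x * g0 x = 0)
    (hbd : ∃ M : ℝ, ∀ x ∈ Set.Ioo a b,
      ‖g0 x‖ ≤ M ∧ ‖(g0 x)⁻¹‖ ≤ M ∧ ‖p x‖ ≤ M ∧ ‖(p x)⁻¹‖ ≤ M) :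
    ∀ x ∈ Set.Ioo a b,
      deriv (fun y => p y * deriv (fun s => g0 s * ∑' k : ℕ,
          ω ^ (2 * k) / ((2 * k)! : ℂ) *
            spps (fun t => g0 t ^ 2) (fun t => (p t * g0 t ^ 2)⁻¹) (2 * k) s) y) x +
        q x * (g0 x * ∑' k : ℕ,
          ω ^ (2 * k) / ((2 * k)! : ℂ) *
            spps (fun t => g0 t ^ 2) (fun t => (p t * g0 t ^ 2)⁻¹) (2 * k) x) =
      ω ^ 2 * (g0 x * ∑' k : ℕ,
          ω ^ (2 * k) / ((2 * k)! : ℂ) *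
            spps (fun t => g0 t ^ 2) (fun t => (p t * g0 t ^ 2)⁻¹) (2 * k) x) := by
  intro x hx
  obtain ⟨hax, hxb⟩ := hx
  have hx : x ∈ Set.Ioo a b := ⟨hax, hxb⟩
  obtain ⟨M, hM⟩ := hbd
  have hM0 : 0 ≤ M := le_trans (norm_nonneg _) (hM 0 ⟨ha, hb⟩).1
  set a' : ℝ := (a + min x 0)/2 with ha'def
  set b' : ℝ := (b + max x 0)/2 with hb'def
  have hmin : a < min x 0 := lt_min hax ha
  have hmax : max x 0 < b := max_lt hxb hb
  have hminx : min x 0 ≤ x := min_le_left x 0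
  have hmin0 : min x 0 ≤ 0 := min_le_right x 0
  have hmaxx : x ≤ max x 0 := le_max_left x 0
  have hmax0 : (0:ℝ) ≤ max x 0 := le_max_right x 0
  have ha'a : a < a' := by rw [ha'def]; linarith
  have ha'x : a' < x := by rw [ha'def]; linarith
  have ha'0 : a' < 0 := by rw [ha'def]; linarith
  have hb'b : b' < b := by rw [hb'def]; linarith
  have hxb' : x < b' := by rw [hb'def]; linarith
  have h0b' : (0:ℝ) < b' := by rw [hb'def]; linarith
  have hsub : Set.Icc a' b' ⊆ Set.Ioo a b :=
    fun t ht => ⟨lt_of_lt_of_le ha'a ht.1, lt_of_le_of_lt ht.2 hb'b⟩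
  have hxI : x ∈ Set.Ioo a' b' := ⟨ha'x, hxb'⟩
  have h0I : (0:ℝ) ∈ Set.Icc a' b' := ⟨ha'0.le, h0b'.le⟩
  have ha'b' : a' ≤ b' := le_trans ha'0.le h0b'.le
  -- clamp function
  set cl : ℝ → ℝ := fun t => max a' (min t b') with hcl
  have hclmem : ∀ t, cl t ∈ Set.Icc a' b' :=
    fun t => ⟨le_max_left _ _, max_le ha'b' (min_le_right _ _)⟩
  have hclid : ∀ t ∈ Set.Icc a' b', cl t = t := by
    intro t ht
    show max a' (min t b') = t
    rw [min_eq_left ht.2, max_eq_right ht.1]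
  have hclcont : Continuous cl := continuous_const.max (continuous_id.min continuous_const)
  -- truncated weights
  set Wo : ℝ → ℂ := fun t => g0 (cl t) ^ 2 with hWo
  set We : ℝ → ℂ := fun t => (p (cl t) * g0 (cl t) ^ 2)⁻¹ with hWe
  have hgcl : Continuous fun t => g0 (cl t) :=
    hg.continuousOn.comp_continuous hclcont fun t => hsub (hclmem t)
  have hpcl : Continuous fun t => p (cl t) :=
    hp.continuousOn.comp_continuous hclcont fun t => hsub (hclmem t)
  have hWocont : Continuous Wo := hgcl.pow 2
  have hWecont : Continuous We :=
    (hpcl.mul (hgcl.pow 2)).inv₀ fun t =>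
      mul_ne_zero (hp0 _ (hsub (hclmem t))) (pow_ne_zero 2 (hg0 _ (hsub (hclmem t))))
  set K : ℝ := (M+1)^3 with hKdef
  have hK1 : 1 ≤ K := one_le_pow₀ (by linarith)
  have hWob : ∀ t, ‖Wo t‖ ≤ K := by
    intro t
    have h1 := (hM _ (hsub (hclmem t))).1
    show ‖g0 (cl t) ^ 2‖ ≤ K
    rw [norm_pow, hKdef]
    calc ‖g0 (cl t)‖ ^ 2 ≤ M ^ 2 := pow_le_pow_left₀ (norm_nonneg _) h1 2
      _ ≤ (M+1) ^ 3 := by nlinarith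
  have hWeb : ∀ t, ‖We t‖ ≤ K := by
    intro t
    obtain ⟨-, h2, -, h4⟩ := hM _ (hsub (hclmem t))
    show ‖(p (cl t) * g0 (cl t) ^ 2)⁻¹‖ ≤ K
    rw [mul_inv, ← inv_pow, norm_mul, norm_pow, hKdef]
    calc ‖(p (cl t))⁻¹‖ * ‖(g0 (cl t))⁻¹‖ ^ 2
        ≤ M * M ^ 2 := mul_le_mul h4 (pow_le_pow_left₀ (norm_nonneg _) h2 2)
          (by positivity) hM0
      _ ≤ (M+1) ^ 3 := by nlinarith
  set R : ℝ := max |a'| |b'| with hRdef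
  have hR0 : 0 ≤ R := le_trans (abs_nonneg a') (le_max_left _ _)
  have hyR : ∀ y ∈ Set.Ioo a' b', |y| ≤ R := by
    intro y hy
    rw [abs_le]
    constructor
    · calc -R ≤ -|a'| := by simp [hRdef]
        _ ≤ a' := neg_abs_le a'
        _ ≤ y := hy.1.le
    · calc y ≤ b' := hy.2.le
        _ ≤ |b'| := le_abs_self b'
        _ ≤ R := le_max_right _ _
  set K' : ℝ := K * (R+1) with hK'def
  have hK'1 : 1 ≤ K' := by nlinarith
  have hXb : ∀ n, ∀ y ∈ Set.Ioo a' b', ‖spps Wo We n y‖ ≤ K' ^ n := by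
    intro n y hy
    refine le_trans (spps_norm_le_s6 Wo We K hWob hWeb n y) ?_
    exact pow_le_pow_left₀ (by positivity)
      (by nlinarith [hyR y hy, abs_nonneg y]) n
  -- the original weights agree with the truncated ones on [a', b']
  have hXeq : ∀ n, ∀ y ∈ Set.Icc a' b',
      spps (fun t => g0 t ^ 2) (fun t => (p t * g0 t ^ 2)⁻¹) n y = spps Wo We n y := by
    refine spps_congr _ _ _ _ a' b' h0I ?_ ?_
    · intro t ht
      show g0 t ^ 2 = g0 (cl t) ^ 2
      rw [hclid t ht]
    · intro t ht
      show (p t * g0 t ^ 2)⁻¹ = (p (cl t) * g0 (cl t) ^ 2)⁻¹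
      rw [hclid t ht]
  -- the series and its formal derivative series
  set S : ℝ → ℂ := fun z => ∑' k : ℕ, ω^(2*k)/((2*k)! : ℂ) * spps Wo We (2*k) z with hSdef
  set T : ℝ → ℂ := fun z => ∑' k : ℕ, ω^(2*k)/((2*k)! : ℂ) * ((2*k : ℕ) : ℂ) *
    spps Wo We (2*k-1) z with hTdef
  have hS : ∀ y ∈ Set.Ioo a' b', HasDerivAt S (T y * We y) y :=
    fun y hy => spps_S_hasDerivAt Wo We ω K' a' b' hWocont hWecont hK'1 (lt_of_lt_of_le ha'0 h0b'.le)
      hXb (fun z hz => le_trans (hWob z) (by nlinarith))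
      (fun z hz => le_trans (hWeb z) (by nlinarith)) y hy
  have hT : ∀ y ∈ Set.Ioo a' b', HasDerivAt T (ω^2 * S y * Wo y) y :=
    fun y hy => spps_T_hasDerivAt Wo We ω K' a' b' hWocont hWecont hK'1
      hXb (fun z hz => le_trans (hWob z) (by nlinarith)) y hy
  -- the statement's function agrees with g0 * S near x
  set F : ℝ → ℂ := fun s => g0 s * ∑' k : ℕ,
      ω ^ (2 * k) / ((2 * k)! : ℂ) *
        spps (fun t => g0 t ^ 2) (fun t => (p t * g0 t ^ 2)⁻¹) (2 * k) s with hFdef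
  have hFeq : Set.EqOn F (fun z => g0 z * S z) (Set.Ioo a' b') := by
    intro y hy
    show g0 y * _ = g0 y * S y
    congr 1
    exact tsum_congr fun k => by rw [hXeq (2*k) y (Set.Ioo_subset_Icc_self hy)]
  have hg0diff : ∀ y ∈ Set.Ioo a b, DifferentiableAt ℝ g0 y := fun y hy =>
    (hg.differentiableOn (by norm_num)).differentiableAt (isOpen_Ioo.mem_nhds hy)
  have hderivF : ∀ y ∈ Set.Ioo a' b',
      deriv F y = deriv g0 y * S y + g0 y * (T y * We y) := by
    intro y hy
    rw [Filter.EventuallyEq.deriv_eq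
      (Filter.eventuallyEq_of_mem (isOpen_Ioo.mem_nhds hy) hFeq)]
    exact (((hg0diff y (hsub (Set.Ioo_subset_Icc_self hy))).hasDerivAt).mul (hS y hy)).deriv
  set P : ℝ → ℂ := fun z => p z * deriv g0 z * S z + (g0 z)⁻¹ * T z with hPdef
  have hPeq : Set.EqOn (fun z => p z * deriv F z) P (Set.Ioo a' b') := by
    intro y hy
    have hyIcc := Set.Ioo_subset_Icc_self hy
    have hyab := hsub hyIcc
    have hWey : We y = (p y * g0 y ^ 2)⁻¹ := by
      show (p (cl y) * g0 (cl y) ^ 2)⁻¹ = _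
      rw [hclid y hyIcc]
    show p y * deriv F y = _
    rw [hderivF y hy, hWey, hPdef]
    field_simp [hp0 y hyab, hg0 y hyab]
  -- differentiate P at x
  have hpdiff : DifferentiableAt ℝ p x :=
    (hp.differentiableOn (by norm_num)).differentiableAt (isOpen_Ioo.mem_nhds hx)
  have hg'diff : DifferentiableAt ℝ (deriv g0) x :=
    ((hg.deriv_of_isOpen (m := 1) isOpen_Ioo (by norm_num)).differentiableOn
      (by norm_num)).differentiableAt (isOpen_Ioo.mem_nhds hx)
  have h1 : HasDerivAt (fun z => p z * deriv g0 z)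
      (deriv (fun z => p z * deriv g0 z) x) x :=
    (hpdiff.mul hg'diff).hasDerivAt
  have hD1 : deriv (fun z => p z * deriv g0 z) x = -(q x * g0 x) :=
    eq_neg_of_add_eq_zero_left (heq x hx)
  rw [hD1] at h1
  have hinv : HasDerivAt (fun z => (g0 z)⁻¹) (-(deriv g0 x) / g0 x ^ 2) x := by
    have h := (hasDerivAt_const x (1:ℂ)).div ((hg0diff x hx).hasDerivAt) (hg0 x hx)
    simp only [Pi.div_def, one_div] at h
    refine h.congr_deriv (Eq.symm ?_)
    ring
  have hHP : HasDerivAt P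
      ((-(q x * g0 x)) * S x + (p x * deriv g0 x) * (T x * We x) +
        ((-(deriv g0 x) / g0 x ^ 2) * T x + (g0 x)⁻¹ * (ω^2 * S x * Wo x))) x :=
    (h1.mul (hS x hxI)).add (hinv.mul (hT x hxI))
  -- put everything together
  have hderivPx : deriv (fun y => p y * deriv F y) x =
      (-(q x * g0 x)) * S x + (p x * deriv g0 x) * (T x * We x) +
        ((-(deriv g0 x) / g0 x ^ 2) * T x + (g0 x)⁻¹ * (ω^2 * S x * Wo x)) := by
    rw [Filter.EventuallyEq.deriv_eq
      (Filter.eventuallyEq_of_mem (isOpen_Ioo.mem_nhds hxI) hPeq)]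
    exact hHP.deriv
  have hFx : F x = g0 x * S x := hFeq hxI
  have hWex : We x = (p x * g0 x ^ 2)⁻¹ := by
    show (p (cl x) * g0 (cl x) ^ 2)⁻¹ = _
    rw [hclid x (Set.Ioo_subset_Icc_self hxI)]
  have hWox : Wo x = g0 x ^ 2 := by
    show g0 (cl x) ^ 2 = _
    rw [hclid x (Set.Ioo_subset_Icc_self hxI)]
  show deriv (fun y => p y * deriv F y) x + q x * F x = ω ^ 2 * F x
  rw [hderivPx, hFx, hWex, hWox]
  field_simp [hp0 x hx, hg0 x hx]
  ring
end
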